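/- arXiv:2409.20172 — 2 statements merged into one kernel-verified Lean document; each statement's English description precedes it below -/
import Mathlib

section
/- Let H be a hypergraph, let x : V(H) → [0,1], let Q ⊆ V(H) be nonempty, let q = max_{v ∈ Q} x(v), let c ∈ Q, and let r, r' ∈ [0,1] be nonnegative reals with q < r' − r. Then for every path (v_0, v_1, …, v_ℓ) in H[Q] with v_0 ∈ B^Q_c(r) and v_ℓ ∈ Q ∖ B^Q_c(r'), the sum of x(v_i) over the indices i with v_i ∈ B^Q_c(r') ∖ B^Q_c(r) is strictly greater than r' − r − q. -/
open Finset
open scoped ENNReal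

/-- A hypergraph: a finite vertex set, a finite set of nonempty hyperedges covering
all vertices. -/
structure HGraph (α : Type*) where
  V : Finset α
  E : Finset (Finset α)
  edge_sub : ∀ e ∈ E, e ⊆ V
  edge_nonempty : ∀ e ∈ E, e.Nonempty
  no_isolated : ∀ v ∈ V, ∃ e ∈ E, v ∈ e

/-- Degeneracy of a graph restricted to a finite vertex set `W`: the least `d` such that
every nonempty subset has a vertex with at most `d` neighbours inside the subset. -/
noncomputable def degeneracyOn {β : Type*} (G : SimpleGraph β) (W : Finset β) : ℕ :=
  sInf {d : ℕ | ∀ W' ⊆ W, W'.Nonempty → ∃ v ∈ W', ((W' : Set β) ∩ G.neighborSet v).ncard ≤ d}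

namespace HGraph

variable {α : Type*}

/-- The primal (Gaifman) graph of a hypergraph. -/
def primal (H : HGraph α) : SimpleGraph α where
  Adj u v := u ≠ v ∧ ∃ e ∈ H.E, u ∈ e ∧ v ∈ e
  symm := by
    constructor
    rintro u v ⟨hne, e, he, hu, hv⟩
    exact ⟨hne.symm, e, he, hv, hu⟩
  loopless := by
    constructor
    rintro u ⟨hne, -⟩
    exact hne rfl

/-- `S` is an `(A,B)`-separator in `H`: every path of the primal graph from a vertex
of `A` to a vertex of `B` meets `S`. -/
def IsSeparator (H : HGraph α) (A B S : Finset α) : Prop :=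
  ∀ a ∈ A, ∀ b ∈ B, ∀ p : H.primal.Walk a b, p.IsPath → ∃ v ∈ p.support, v ∈ S

/-- `x` is a fractional `(A,B)`-separator in `H`. -/
def IsFracSeparator [DecidableEq α] (H : HGraph α) (A B : Finset α) (x : α → ℝ) : Prop :=
  ∀ a ∈ A, ∀ b ∈ B, ∀ p : H.primal.Walk a b, p.IsPath →
    1 ≤ ∑ w ∈ p.support.toFinset, x w

/-- Fractional edge cover number of a weight function `x` on vertices. -/
noncomputable def fracCover [DecidableEq α] (H : HGraph α) (x : α → ℝ) : ℝ :=
  sInf {c : ℝ | ∃ y : Finset α → ℝ, (∀ e, 0 ≤ y e ∧ y e ≤ 1) ∧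
    (∀ v ∈ H.V, x v ≤ ∑ e ∈ H.E, if v ∈ e then y e else 0) ∧
    c = ∑ e ∈ H.E, y e}

/-- Fractional edge cover number `ρ*_H(S)` of a vertex set. -/
noncomputable def fracCoverSet [DecidableEq α] (H : HGraph α) (S : Finset α) : ℝ :=
  H.fracCover (fun v => if v ∈ S then 1 else 0)

/-- Fractional `E`-edge cover number of `x` (`∞` if no fractional `E`-edge cover exists). -/
noncomputable def fracCoverE [DecidableEq α] (H : HGraph α) (E : Finset (Finset α))
    (x : α → ℝ) : ℝ≥0∞ :=
  sInf {c : ℝ≥0∞ | ∃ y : Finset α → ℝ, (∀ e, 0 ≤ y e ∧ y e ≤ 1) ∧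
    (∀ v ∈ H.V, x v ≤ ∑ e ∈ E, if v ∈ e then y e else 0) ∧
    c = ENNReal.ofReal (∑ e ∈ E, y e)}

/-- Fractional `E`-edge cover number `ρ*_{H,E}(S)` of a vertex set. -/
noncomputable def fracCoverESet [DecidableEq α] (H : HGraph α) (E : Finset (Finset α))
    (S : Finset α) : ℝ≥0∞ :=
  H.fracCoverE E (fun v => if v ∈ S then 1 else 0)

/-- Integral edge cover number `ρ_H(S)`. -/
noncomputable def intCover [DecidableEq α] (H : HGraph α) (S : Finset α) : ℕ :=
  sInf {n : ℕ | ∃ F ⊆ H.E, S ⊆ F.biUnion id ∧ F.card = n}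

/-- Independence number `α_H(R)`: maximum size of a subset of `R` such that no
hyperedge contains two of its vertices. -/
noncomputable def indepNum [DecidableEq α] (H : HGraph α) (R : Finset α) : ℕ :=
  sSup {n : ℕ | ∃ I ⊆ R, (∀ e ∈ H.E, (I ∩ e).card ≤ 1) ∧ I.card = n}

/-- Maximum intersection size `η_H` of two distinct hyperedges. -/
noncomputable def eta [DecidableEq α] (H : HGraph α) : ℕ :=
  sSup {n : ℕ | ∃ e₁ ∈ H.E, ∃ e₂ ∈ H.E, e₁ ≠ e₂ ∧ n = (e₁ ∩ e₂).card}

/-- The (bipartite) incidence graph of a hypergraph. -/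
def incidence (H : HGraph α) : SimpleGraph (α ⊕ Finset α) where
  Adj p q :=
    (∃ v e, p = Sum.inl v ∧ q = Sum.inr e ∧ e ∈ H.E ∧ v ∈ e) ∨
    (∃ v e, p = Sum.inr e ∧ q = Sum.inl v ∧ e ∈ H.E ∧ v ∈ e)
  symm := by
    constructor
    rintro p q (⟨v, e, rfl, rfl, he, hv⟩ | ⟨v, e, rfl, rfl, he, hv⟩)
    · exact Or.inr ⟨v, e, rfl, rfl, he, hv⟩
    · exact Or.inl ⟨v, e, rfl, rfl, he, hv⟩
  loopless := by
    constructor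
    rintro p (⟨v, e, rfl, h, -, -⟩ | ⟨v, e, rfl, h, -, -⟩) <;> exact absurd h (by simp)

/-- `μ_H`: degeneracy of the incidence graph of `H`. -/
noncomputable def mu [DecidableEq α] (H : HGraph α) : ℕ :=
  degeneracyOn H.incidence (H.V.image Sum.inl ∪ H.E.image Sum.inr)

/-- `γ(P) = ∑_{e ∈ E(H) : e ∩ P ≠ ∅} γ(e)`. -/
noncomputable def edgeWeight [DecidableEq α] (H : HGraph α) (γ : Finset α → ℝ)
    (P : Finset α) : ℝ :=
  ∑ e ∈ H.E, if (e ∩ P).Nonempty then γ e else 0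

/-- `u` can reach `v` by a walk of the primal graph avoiding `S`. -/
def ReachOutside (H : HGraph α) (S : Finset α) (u v : α) : Prop :=
  ∃ p : H.primal.Walk u v, ∀ w ∈ p.support, w ∉ S

/-- The connected component of `v` in the primal graph of `H` after deleting `S`. -/
noncomputable def comp (H : HGraph α) (S : Finset α) (v : α) : Finset α := by
  classical exact H.V.filter (fun u => H.ReachOutside S v u)

/-- `S` is a `(γ,φ)`-balanced separator in `H`. -/
def IsGammaBalSep [DecidableEq α] (H : HGraph α) (γ : Finset α → ℝ) (φ : ℝ)
    (S : Finset α) : Prop :=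
  ∀ v ∈ H.V, v ∉ S → H.edgeWeight γ (H.comp S v) ≤ φ * H.edgeWeight γ H.V

/-- `S` is a `(Z,φ)`-balanced separator in `H`. -/
def IsZBalSep [DecidableEq α] (H : HGraph α) (Z : Finset α) (φ : ℝ)
    (S : Finset α) : Prop :=
  ∀ v ∈ H.V, v ∉ S →
    H.fracCoverSet (H.comp S v ∩ Z) ≤ φ * H.fracCoverSet Z

/-- `dist*_{H,x}(u,v)`: the minimum of `1` and the minimum total `x`-weight of a path
from `u` to `v` in the primal graph. -/
noncomputable def dist1 [DecidableEq α] (H : HGraph α) (x : α → ℝ) (u v : α) : ℝ :=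
  sInf ({1} ∪ {c : ℝ | ∃ p : H.primal.Walk u v, p.IsPath ∧ c = ∑ w ∈ p.support.toFinset, x w})

/-- `dist*_{H,x}(e,e') = min_{u ∈ e, v ∈ e'} dist*_{H,x}(u,v)`. -/
noncomputable def distE [DecidableEq α] (H : HGraph α) (x : α → ℝ)
    (e e' : Finset α) : ℝ :=
  sInf {c : ℝ | ∃ u ∈ e, ∃ v ∈ e', c = H.dist1 x u v}

/-- `x` is a fractional `(γ,φ)`-balanced separator in `H`. -/
def IsFracGammaBalSep [DecidableEq α] (H : HGraph α) (γ : Finset α → ℝ) (φ : ℝ)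
    (x : α → ℝ) : Prop :=
  ∀ e ∈ H.E, (1 - φ) * (∑ e' ∈ H.E, γ e') ≤ ∑ e' ∈ H.E, H.distE x e e' * γ e'

/-- The induced subhypergraph `H[Q]` for `Q ⊆ V(H)`. -/
def induce [DecidableEq α] (H : HGraph α) (Q : Finset α) (hQ : Q ⊆ H.V) :
    HGraph α where
  V := Q
  E := (H.E.image (fun e => e ∩ Q)).filter (fun e => e.Nonempty)
  edge_sub := by
    intro e he
    simp only [mem_filter, mem_image] at he
    obtain ⟨⟨e', -, rfl⟩, -⟩ := he
    exact inter_subset_right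
  edge_nonempty := by
    intro e he
    exact (mem_filter.mp he).2
  no_isolated := by
    intro v hv
    obtain ⟨e, he, hve⟩ := H.no_isolated v (hQ hv)
    exact ⟨e ∩ Q, mem_filter.mpr ⟨mem_image.mpr ⟨e, he, rfl⟩,
      ⟨v, mem_inter.mpr ⟨hve, hv⟩⟩⟩, mem_inter.mpr ⟨hve, hv⟩⟩

/-- The ball `B^Q_c(r)` of radius `r` around `c` in `H[Q]` with respect to `x`. -/
noncomputable def ball [DecidableEq α] (H : HGraph α) (x : α → ℝ) (Q : Finset α)
    (hQ : Q ⊆ H.V) (c : α) (r : ℝ) : Finset α := by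
  classical exact Q.filter (fun v => (H.induce Q hQ).dist1 x c v ≤ r)

end HGraph

/-- A tree decomposition of a hypergraph. -/
structure TreeDecomp {α : Type*} (H : HGraph α) where
  ι : Type
  fintype : Fintype ι
  T : SimpleGraph ι
  isTree : T.IsTree
  bag : ι → Finset α
  bag_sub : ∀ t, bag t ⊆ H.V
  bag_conn : ∀ v ∈ H.V, (SimpleGraph.induce {t | v ∈ bag t} T).Connected
  edge_bag : ∀ e ∈ H.E, ∃ t, e ⊆ bag t
namespace HGraph
variable {α : Type*} [DecidableEq α]

lemma dist1_bddBelow (H : HGraph α) (x : α → ℝ) (hx : ∀ v, 0 ≤ x v) (u v : α) :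
    BddBelow ({1} ∪ {c : ℝ | ∃ p : H.primal.Walk u v, p.IsPath ∧
      c = ∑ w ∈ p.support.toFinset, x w}) := by
  refine ⟨0, ?_⟩
  rintro s (rfl | ⟨p, hp, rfl⟩)
  · norm_num
  · exact Finset.sum_nonneg fun w _ => hx w

lemma dist1_le_one (H : HGraph α) (x : α → ℝ) (hx : ∀ v, 0 ≤ x v) (u v : α) :
    H.dist1 x u v ≤ 1 :=
  csInf_le (H.dist1_bddBelow x hx u v) (Or.inl rfl)

lemma dist1_step (H : HGraph α) (x : α → ℝ) (hx : ∀ v, 0 ≤ x v)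
    (c u v : α) (h : H.primal.Adj u v) :
    H.dist1 x c v ≤ H.dist1 x c u + x v := by
  rcases le_or_gt 1 (H.dist1 x c u + x v) with h1 | h1
  · exact (H.dist1_le_one x hx c v).trans h1
  · refine le_of_forall_pos_le_add fun ε hε => ?_
    set T := ({1} ∪ {c' : ℝ | ∃ p : H.primal.Walk c u, p.IsPath ∧
      c' = ∑ w ∈ p.support.toFinset, x w}) with hT
    have hTne : T.Nonempty := ⟨1, Or.inl rfl⟩
    have hε' : 0 < min ε (1 - (H.dist1 x c u + x v)) := lt_min hε (by linarith)
    obtain ⟨s, hsT, hs⟩ := Real.lt_sInf_add_pos hTne hε'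
    have hdist : sInf T = H.dist1 x c u := rfl
    rw [hdist] at hs
    have hs1 : s < 1 := by
      have := min_le_right ε (1 - (H.dist1 x c u + x v))
      have := hx v
      linarith
    rcases hsT with rfl | ⟨p, hp, rfl⟩
    · exact absurd hs1 (by norm_num)
    · -- build the walk p ++ edge
      set w : H.primal.Walk c v := p.append (SimpleGraph.Walk.cons h SimpleGraph.Walk.nil)
      have hball : H.dist1 x c v ≤ ∑ z ∈ w.bypass.support.toFinset, x z :=
        csInf_le (H.dist1_bddBelow x hx c v) (Or.inr ⟨w.bypass, w.bypass_isPath, rfl⟩)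
      have hsub : w.bypass.support.toFinset ⊆ insert v p.support.toFinset := by
        intro z hz
        rw [List.mem_toFinset] at hz
        have := w.support_bypass_subset hz
        simp only [w, SimpleGraph.Walk.support_append, List.mem_append] at this
        rcases this with h' | h'
        · exact Finset.mem_insert_of_mem (List.mem_toFinset.mpr h')
        · simp at h'
          simp [h']
      have hsum : ∑ z ∈ w.bypass.support.toFinset, x z ≤
          x v + ∑ z ∈ p.support.toFinset, x z := by
        calc ∑ z ∈ w.bypass.support.toFinset, x z
            ≤ ∑ z ∈ insert v p.support.toFinset, x z :=
              Finset.sum_le_sum_of_subset_of_nonneg hsub (fun i _ _ => hx i)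
          _ ≤ x v + ∑ z ∈ p.support.toFinset, x z := by
              by_cases hv : v ∈ p.support.toFinset
              · rw [Finset.insert_eq_self.mpr hv]
                have := hx v; linarith
              · rw [Finset.sum_insert hv]
      have := min_le_left ε (1 - (H.dist1 x c u + x v))
      linarith

end HGraph

namespace HGraph

lemma mem_ball_iff (H : HGraph α) [DecidableEq α] (x : α → ℝ) (Q : Finset α)
    (hQ : Q ⊆ H.V) (c : α) (r : ℝ) (v : α) :
    v ∈ H.ball x Q hQ c r ↔ v ∈ Q ∧ (H.induce Q hQ).dist1 x c v ≤ r := by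
  simp [HGraph.ball]

lemma adj_mem (H : HGraph α) [DecidableEq α] (Q : Finset α) (hQ : Q ⊆ H.V) {u v : α}
    (h : (H.induce Q hQ).primal.Adj u v) : u ∈ Q ∧ v ∈ Q := by
  obtain ⟨-, e, he, hu, hv⟩ := h
  exact ⟨(H.induce Q hQ).edge_sub e he hu, (H.induce Q hQ).edge_sub e he hv⟩

lemma annulus_aux (H : HGraph α) [DecidableEq α] (x : α → ℝ) (hx : ∀ v, 0 ≤ x v)
    (Q : Finset α) (hQ : Q ⊆ H.V)
    (q : ℝ) (hq : ∀ v ∈ Q, x v ≤ q)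
    (c : α) (r r' : ℝ) :
    ∀ {a b : α} (p : (H.induce Q hQ).primal.Walk a b), p.IsPath →
      b ∉ H.ball x Q hQ c r' → a ∈ H.ball x Q hQ c r' →
      r' - max ((H.induce Q hQ).dist1 x c a) r - q <
        ∑ v ∈ p.support.tail.toFinset.filter
            (fun v => v ∈ H.ball x Q hQ c r' ∧ v ∉ H.ball x Q hQ c r), x v := by
  intro a b p
  induction p with
  | nil => intro _ hb ha; exact absurd ha hb
  | @cons a a' b h p' ih =>
    intro hp hb ha
    have hp' : p'.IsPath := hp.of_cons
    have ha'Q : a' ∈ Q := (H.adj_mem Q hQ h).2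
    have hDstep : (H.induce Q hQ).dist1 x c a' ≤ (H.induce Q hQ).dist1 x c a + x a' :=
      (H.induce Q hQ).dist1_step x hx c a a' h
    have hsupp : (SimpleGraph.Walk.cons h p').support.tail = p'.support := by
      simp [SimpleGraph.Walk.support_cons]
    rw [hsupp]
    have hsumnn : (0:ℝ) ≤ ∑ v ∈ p'.support.toFinset.filter
        (fun v => v ∈ H.ball x Q hQ c r' ∧ v ∉ H.ball x Q hQ c r), x v :=
      Finset.sum_nonneg fun i _ => hx i
    have htailsub : ∑ v ∈ p'.support.tail.toFinset.filter
          (fun v => v ∈ H.ball x Q hQ c r' ∧ v ∉ H.ball x Q hQ c r), x v ≤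
        ∑ v ∈ p'.support.toFinset.filter
          (fun v => v ∈ H.ball x Q hQ c r' ∧ v ∉ H.ball x Q hQ c r), x v := by
      refine Finset.sum_le_sum_of_subset_of_nonneg
        (Finset.filter_subset_filter _ ?_) (fun i _ _ => hx i)
      intro z hz
      exact List.mem_toFinset.mpr (List.tail_subset _ (List.mem_toFinset.mp hz))
    by_cases haY : a' ∈ H.ball x Q hQ c r'
    · have ihh := ih hp' hb haY
      by_cases harY : a' ∈ H.ball x Q hQ c r
      · have hDa' : (H.induce Q hQ).dist1 x c a' ≤ r :=
          ((H.mem_ball_iff x Q hQ c r a').mp harY).2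
        rw [max_eq_right hDa'] at ihh
        have h1 : r ≤ max ((H.induce Q hQ).dist1 x c a) r := le_max_right _ _
        linarith
      · have hDa' : r < (H.induce Q hQ).dist1 x c a' := by
          rw [H.mem_ball_iff x Q hQ c r a'] at harY
          exact lt_of_not_ge fun hle => harY ⟨ha'Q, hle⟩
        rw [max_eq_left hDa'.le] at ihh
        have hnodup := hp'.support_nodup
        rw [p'.support_eq_cons] at hnodup
        have hnd : a' ∉ p'.support.tail.toFinset := by
          rw [List.mem_toFinset]; exact (List.nodup_cons.mp hnodup).1
        have hdecomp : ∑ v ∈ p'.support.toFinset.filter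
              (fun v => v ∈ H.ball x Q hQ c r' ∧ v ∉ H.ball x Q hQ c r), x v
            = x a' + ∑ v ∈ p'.support.tail.toFinset.filter
              (fun v => v ∈ H.ball x Q hQ c r' ∧ v ∉ H.ball x Q hQ c r), x v := by
          rw [p'.support_eq_cons, List.toFinset_cons, Finset.filter_insert,
            if_pos ⟨haY, harY⟩,
            Finset.sum_insert (fun hmem => hnd (Finset.mem_of_mem_filter _ hmem))]
          rfl
        have h1 : (H.induce Q hQ).dist1 x c a ≤ max ((H.induce Q hQ).dist1 x c a) r :=
          le_max_left _ _
        linarith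
    · have hr'a' : r' < (H.induce Q hQ).dist1 x c a' := by
        rw [H.mem_ball_iff x Q hQ c r' a'] at haY
        exact lt_of_not_ge fun hle => haY ⟨ha'Q, hle⟩
      have h1 : (H.induce Q hQ).dist1 x c a ≤ max ((H.induce Q hQ).dist1 x c a) r :=
        le_max_left _ _
      have hxq := hq a' ha'Q
      linarith

end HGraph


/-- Any path of `H[Q]` from inside `B^Q_c(r)` to outside `B^Q_c(r')`
picks up `x`-weight more than `r' − r − q` inside the annulus `B^Q_c(r') ∖ B^Q_c(r)`. -/
theorem annulus_weight {α : Type*} [DecidableEq α] (H : HGraph α)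
    (x : α → ℝ) (hx01 : ∀ v, 0 ≤ x v ∧ x v ≤ 1)
    (Q : Finset α) (hQ : Q ⊆ H.V) (hQne : Q.Nonempty)
    (q : ℝ) (hq : q = Q.sup' hQne x)
    (c : α) (hc : c ∈ Q)
    (r r' : ℝ) (hr0 : 0 ≤ r) (hr1 : r ≤ 1) (hr'0 : 0 ≤ r') (hr'1 : r' ≤ 1)
    (hgap : q < r' - r) :
    ∀ (v₀ vℓ : α) (p : (H.induce Q hQ).primal.Walk v₀ vℓ), p.IsPath →
      v₀ ∈ H.ball x Q hQ c r → vℓ ∈ Q → vℓ ∉ H.ball x Q hQ c r' →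
      r' - r - q <
        ∑ v ∈ p.support.toFinset.filter
            (fun v => v ∈ H.ball x Q hQ c r' ∧ v ∉ H.ball x Q hQ c r), x v := by
  intro v₀ vℓ p hp h₀ hℓQ hℓ
  have hx : ∀ v, 0 ≤ x v := fun v => (hx01 v).1
  have hqle : ∀ v ∈ Q, x v ≤ q := fun v hv => hq ▸ Finset.le_sup' x hv
  have hq0 : 0 ≤ q := (hx c).trans (hqle c hc)
  have hrr' : r ≤ r' := by linarith
  have h₀' : v₀ ∈ H.ball x Q hQ c r' := by
    rw [H.mem_ball_iff] at h₀ ⊢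
    exact ⟨h₀.1, h₀.2.trans hrr'⟩
  have key := H.annulus_aux x hx Q hQ q hqle c r r' p hp hℓ h₀'
  have hD0 : (H.induce Q hQ).dist1 x c v₀ ≤ r := ((H.mem_ball_iff x Q hQ c r v₀).mp h₀).2
  rw [max_eq_right hD0] at key
  refine key.trans_le (Finset.sum_le_sum_of_subset_of_nonneg
    (Finset.filter_subset_filter _ ?_) (fun i _ _ => hx i))
  intro z hz
  exact List.mem_toFinset.mpr (List.tail_subset _ (List.mem_toFinset.mp hz))
end

section
/- Let H be a hypergraph admitting a tree decomposition of fractional hypertree width at most ω. Then for every function γ : E(H) → [0,1] there exists a (γ,1/2)-balanced separator S ⊆ V(H) in H with ρ*_H(S) ≤ ω. -/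
open Finset
open scoped ENNReal

open SimpleGraph Finset

section TreeAux

variable {V : Type*} {G : SimpleGraph V}

/-- In a tree, every path between two vertices realizes the distance. -/
private lemma tree_path_length (hG : G.IsTree) {a b : V} (p : G.Walk a b) (hp : p.IsPath) :
    p.length = G.dist a b := by
  obtain ⟨q, hq, hql⟩ := hG.isConnected.exists_path_of_dist a b
  rw [(hG.existsUnique_path a b).unique hp hq, hql]

/-- `b` is reachable from `a` by a walk avoiding `t`. -/
private def Reach (G : SimpleGraph V) (t a b : V) : Prop :=
  ∃ p : G.Walk a b, t ∉ p.support

private lemma Reach.symm {t a b : V} (h : Reach G t a b) : Reach G t b a := by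
  obtain ⟨p, hp⟩ := h
  exact ⟨p.reverse, by simpa using hp⟩

private lemma Reach.trans {t a b c : V} (h : Reach G t a b) (h' : Reach G t b c) :
    Reach G t a c := by
  obtain ⟨p, hp⟩ := h
  obtain ⟨q, hq⟩ := h'
  refine ⟨p.append q, ?_⟩
  rw [SimpleGraph.Walk.mem_support_append_iff]
  tauto

private lemma dist_eq_add_one [DecidableEq V] (hG : G.IsTree) {t t' s : V} (h : G.Adj t t')
    (hr : Reach G t t' s) : G.dist t s = G.dist t' s + 1 := by
  obtain ⟨p, hp⟩ := hr
  have hb : t ∉ p.bypass.support := fun hh => hp (SimpleGraph.Walk.support_bypass_subset _ hh)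
  have hcons : (SimpleGraph.Walk.cons h p.bypass).IsPath := by
    rw [SimpleGraph.Walk.cons_isPath_iff]
    exact ⟨p.bypass_isPath, hb⟩
  have h1 := tree_path_length hG _ hcons
  have h2 := tree_path_length hG _ p.bypass_isPath
  rw [SimpleGraph.Walk.length_cons] at h1
  omega

private lemma start_not_mem_dropUntil [DecidableEq V] {a b s : V} (q : G.Walk a s)
    (hq : q.IsPath) (hb : b ∈ q.support) (hba : b ≠ a) :
    a ∉ (q.dropUntil b hb).support := by
  have hnd : q.support.Nodup := hq.support_nodup
  rw [← q.take_spec hb, SimpleGraph.Walk.support_append] at hnd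
  obtain ⟨-, -, hdisj⟩ := List.nodup_append.mp hnd
  intro ha
  rw [SimpleGraph.Walk.support_eq_cons (q.dropUntil b hb)] at ha
  rcases List.mem_cons.mp ha with h | h
  · exact hba h.symm
  · exact hdisj _ (SimpleGraph.Walk.start_mem_support _) _ h rfl

private lemma reach_or [DecidableEq V] (hG : G.Connected) {t t' : V} (hne : t ≠ t') (s : V) :
    Reach G t t' s ∨ Reach G t' t s := by
  classical
  obtain ⟨q0⟩ := hG.preconnected t s
  by_cases hm : t' ∈ q0.bypass.support
  · exact Or.inl ⟨q0.bypass.dropUntil t' hm,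
      start_not_mem_dropUntil _ q0.bypass_isPath hm (Ne.symm hne)⟩
  · exact Or.inr ⟨q0.bypass, hm⟩

private lemma exists_adj_reach [DecidableEq V] (hG : G.Connected) {t s : V} (hs : s ≠ t) :
    ∃ x, G.Adj t x ∧ Reach G t s x := by
  obtain ⟨q0⟩ := hG.preconnected t s
  have hqp := q0.bypass_isPath
  generalize q0.bypass = q at hqp
  cases q with
  | nil => exact absurd rfl hs
  | @cons _ x _ hadj p =>
    rw [SimpleGraph.Walk.cons_isPath_iff] at hqp
    exact ⟨x, hadj, Reach.symm ⟨p, hqp.2⟩⟩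

open scoped Classical in
private lemma centroid_exists {V : Type} [Fintype V] (G : SimpleGraph V) (hG : G.IsTree)
    (w : V → ℝ) :
    ∃ t : V, ∀ s, s ≠ t →
      ∑ a ∈ Finset.univ.filter (fun a => Reach G t s a), w a ≤ (∑ a, w a) / 2 := by
  have hne : Nonempty V := hG.isConnected.nonempty
  set φ : V → ℝ := fun t0 => ∑ a, w a * (G.dist t0 a : ℝ) with hφ
  obtain ⟨t, -, ht⟩ := Finset.exists_min_image Finset.univ φ ⟨hne.some, Finset.mem_univ _⟩
  refine ⟨t, fun s hs => ?_⟩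
  by_contra hlt
  push_neg at hlt
  obtain ⟨x, hadj, hsx⟩ := exists_adj_reach hG.isConnected hs
  -- heavy set equality
  have hset : Finset.univ.filter (fun a => Reach G t s a)
      = Finset.univ.filter (fun a => Reach G t x a) := by
    apply Finset.filter_congr
    intro a _
    constructor
    · intro h; exact (hsx.symm).trans h
    · intro h; exact hsx.trans h
  rw [hset] at hlt
  set A := ∑ a ∈ Finset.univ.filter (fun a => Reach G t x a), w a with hA
  have hsplit := Finset.sum_filter_add_sum_filter_not Finset.univ (fun a => Reach G t x a) w
  have hdiff : φ x - φ t = (∑ a, w a) - 2 * A := by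
    have e1 : φ x - φ t = ∑ a, w a * ((G.dist x a : ℝ) - G.dist t a) := by
      rw [hφ]
      rw [← Finset.sum_sub_distrib]
      apply Finset.sum_congr rfl
      intro a _; ring
    rw [e1, ← Finset.sum_filter_add_sum_filter_not Finset.univ (fun a => Reach G t x a)]
    have h1 : ∑ a ∈ Finset.univ.filter (fun a => Reach G t x a),
        w a * ((G.dist x a : ℝ) - G.dist t a) = -A := by
      rw [hA, ← Finset.sum_neg_distrib]
      apply Finset.sum_congr rfl
      intro a ha
      have hr := (Finset.mem_filter.mp ha).2
      have := dist_eq_add_one hG hadj hr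
      rw [this]; push_cast; ring
    have h2 : ∑ a ∈ Finset.univ.filter (fun a => ¬ Reach G t x a),
        w a * ((G.dist x a : ℝ) - G.dist t a) = ∑ a ∈ Finset.univ.filter (fun a => ¬ Reach G t x a), w a := by
      apply Finset.sum_congr rfl
      intro a ha
      have hr := (Finset.mem_filter.mp ha).2
      have hr' : Reach G x t a := (reach_or hG.isConnected hadj.ne a).resolve_left hr
      have := dist_eq_add_one hG hadj.symm hr'
      rw [this]; push_cast; ring
    rw [h1, h2]
    linarith [hsplit]
  have : φ x < φ t := by linarith
  exact absurd (ht x (Finset.mem_univ x)) (not_le.mpr this)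

end TreeAux



private lemma same_vertex_reach {α : Type*} (H : HGraph α) (D : TreeDecomp H)
    {t : D.ι} {v : α} {a b : D.ι} (hv : v ∉ D.bag t) (ha : v ∈ D.bag a) (hb : v ∈ D.bag b) :
    Reach D.T t a b := by
  have hvV : v ∈ H.V := D.bag_sub a ha
  obtain ⟨q⟩ := (D.bag_conn v hvV).preconnected ⟨a, ha⟩ ⟨b, hb⟩
  refine ⟨q.map (SimpleGraph.Embedding.induce {t | v ∈ D.bag t}).toHom, ?_⟩
  intro hmem
  replace hmem : t ∈ (q.map (SimpleGraph.Embedding.induce {t | v ∈ D.bag t}).toHom).support := hmem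
  rw [SimpleGraph.Walk.support_map] at hmem
  obtain ⟨⟨c, hc⟩, -, rfl⟩ := List.mem_map.mp hmem
  exact hv hc

private lemma walk_bags_reach {α : Type*} (H : HGraph α) (D : TreeDecomp H)
    (t : D.ι) : ∀ {u u' : α} (p : H.primal.Walk u u'),
    (∀ z ∈ p.support, z ∉ D.bag t) →
    ∀ a b : D.ι, u ∈ D.bag a → u' ∈ D.bag b → Reach D.T t a b := by
  intro u u' p
  induction p with
  | nil =>
    intro hsup a b ha hb
    exact same_vertex_reach H D (hsup _ (SimpleGraph.Walk.start_mem_support _)) ha hb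
  | cons h p ih =>
    intro hsup a b ha hb
    obtain ⟨e', he', hue, hxe⟩ := h.2
    obtain ⟨c, hc⟩ := D.edge_bag e' he'
    have hu := hsup _ (SimpleGraph.Walk.start_mem_support (SimpleGraph.Walk.cons h p))
    have h1 : Reach D.T t a c := same_vertex_reach H D hu ha (hc hue)
    have hsub : ∀ z ∈ p.support, z ∉ D.bag t := fun z hz =>
      hsup z (by rw [SimpleGraph.Walk.support_cons]; exact List.mem_cons_of_mem _ hz)
    exact h1.trans (ih hsub c b (hc hxe) hb)

/-- If `H` has a tree decomposition of fractional hypertree width at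
most `ω`, then for every `γ` there is a `(γ,1/2)`-balanced separator with `ρ*_H(S) ≤ ω`. -/
theorem bal_sep_exists {α : Type*} [DecidableEq α] (H : HGraph α)
    (D : TreeDecomp H) (ω : ℝ) (hω : ∀ t, H.fracCoverSet (D.bag t) ≤ ω)
    (γ : Finset α → ℝ) (hγ01 : ∀ e, 0 ≤ γ e ∧ γ e ≤ 1) :
    ∃ S ⊆ H.V, H.IsGammaBalSep γ (1 / 2) S ∧ H.fracCoverSet S ≤ ω := by
  classical
  haveI : Fintype D.ι := D.fintype
  haveI hne : Nonempty D.ι := D.isTree.isConnected.nonempty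
  set f : Finset α → D.ι := fun e => if h : ∃ t, e ⊆ D.bag t then h.choose
    else Classical.arbitrary _ with hf
  have hfspec : ∀ e ∈ H.E, e ⊆ D.bag (f e) := by
    intro e he
    have h : ∃ t, e ⊆ D.bag t := D.edge_bag e he
    simp only [hf, dif_pos h]
    exact h.choose_spec
  set w : D.ι → ℝ := fun a => ∑ e ∈ H.E.filter (fun e => f e = a), γ e with hw
  obtain ⟨t, ht⟩ := centroid_exists D.T D.isTree w
  refine ⟨D.bag t, D.bag_sub t, ?_, hω t⟩
  have hWV : H.edgeWeight γ H.V = ∑ e ∈ H.E, γ e := by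
    unfold HGraph.edgeWeight
    apply Finset.sum_congr rfl
    intro e he
    rw [if_pos]
    rw [Finset.inter_eq_left.mpr (H.edge_sub e he)]
    exact H.edge_nonempty e he
  have hWw : ∑ a, w a = ∑ e ∈ H.E, γ e := by
    simp only [hw]
    rw [Finset.sum_fiberwise_eq_sum_filter H.E Finset.univ f γ]
    simp
  intro v hv hvS
  set C := H.comp (D.bag t) v with hC
  obtain ⟨e0, he0, hve0⟩ := H.no_isolated v hv
  obtain ⟨r, hr⟩ := D.edge_bag e0 he0
  have hvr : v ∈ D.bag r := hr hve0
  have hrt : r ≠ t := fun h => hvS (h ▸ hvr)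
  have hmain : ∀ e ∈ H.E, (e ∩ C).Nonempty → Reach D.T t r (f e) := by
    rintro e he ⟨u, hu⟩
    rw [Finset.mem_inter] at hu
    have huC : u ∈ H.V ∧ H.ReachOutside (D.bag t) v u := by
      have := hu.2
      rw [hC] at this
      unfold HGraph.comp at this
      simpa using this
    obtain ⟨p, hp⟩ := huC.2
    exact walk_bags_reach H D t p hp r (f e) hvr (hfspec e he hu.1)
  have h1 : H.edgeWeight γ C = ∑ e ∈ H.E.filter (fun e => (e ∩ C).Nonempty), γ e := by
    unfold HGraph.edgeWeight
    rw [Finset.sum_filter]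
  have h2 : ∑ e ∈ H.E.filter (fun e => (e ∩ C).Nonempty), γ e
      ≤ ∑ e ∈ H.E.filter (fun e => Reach D.T t r (f e)), γ e := by
    apply Finset.sum_le_sum_of_subset_of_nonneg
    · intro e he
      rw [Finset.mem_filter] at he ⊢
      exact ⟨he.1, hmain e he.1 he.2⟩
    · exact fun e _ _ => (hγ01 e).1
  have h3 : ∑ e ∈ H.E.filter (fun e => Reach D.T t r (f e)), γ e
      = ∑ a ∈ Finset.univ.filter (fun a => Reach D.T t r a), w a := by
    simp only [hw]
    rw [Finset.sum_fiberwise_eq_sum_filter H.E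
      (Finset.univ.filter (fun a => Reach D.T t r a)) f γ]
    apply Finset.sum_congr _ (fun _ _ => rfl)
    apply Finset.filter_congr
    intro e _
    simp
  have h4 := ht r hrt
  rw [h1, hWV]
  calc ∑ e ∈ H.E.filter (fun e => (e ∩ C).Nonempty), γ e
      ≤ ∑ a ∈ Finset.univ.filter (fun a => Reach D.T t r a), w a := h2.trans (le_of_eq h3)
    _ ≤ (∑ a, w a) / 2 := h4
    _ = 1 / 2 * ∑ e ∈ H.E, γ e := by rw [hWw]; ring
end
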